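/- Let R = ℤ[z,w]/I, where I is the ideal of ℤ[z,w] generated by 2w − zw and w² − 2w, let ℤ[θ,θ⁻¹] be the ring of Laurent polynomials over ℤ, and let r : R → ℤ[θ,θ⁻¹] be the ring homomorphism determined by r(z) = 2 − θ − θ⁻¹ and r(w) = 0. Then for every n ∈ ℕ, the preimage under r of the ideal of ℤ[θ,θ⁻¹] generated by (1 − θ)^n is exactly the ideal of R generated by z^⌈n/2⌉ and w, where ⌈n/2⌉ denotes the ceiling of n/2. -/

import Mathlib

section helpers
open LaurentPolynomial Polynomial

lemma hx2 : (2 - T 1 - T (-1) : LaurentPolynomial ℤ) = -T (-1) * (1 - T 1)^2 := by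
  have h1 : (T 1 : LaurentPolynomial ℤ)^2 * T (-1) = T 1 := by
    rw [T_pow, ← T_add]; norm_num
  have h0 : (T 1 : LaurentPolynomial ℤ) * T (-1) = 1 := by
    rw [← T_add]; norm_num
  ring_nf
  rw [h1, h0]
  ring

lemma key (P : Polynomial ℤ) (n : ℕ)
    (h : Polynomial.aeval ((2 : LaurentPolynomial ℤ) - T 1 - T (-1)) P ∈
      Ideal.span {((1 - T 1)^n : LaurentPolynomial ℤ)}) :
    ∀ k, 2 * k < n → P.coeff k = 0 := by
  set d := P.natDegree with hd
  set Q : Polynomial ℤ :=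
    ∑ i ∈ Finset.range (d+1),
      Polynomial.C (P.coeff i) * (-1)^i * X^(d-i) * (1-X)^(2*i) with hQ
  have hQL : Q.toLaurent
      = T (d:ℤ) * Polynomial.aeval ((2 : LaurentPolynomial ℤ) - T 1 - T (-1)) P := by
    rw [Polynomial.aeval_eq_sum_range, Finset.mul_sum, hQ, map_sum]
    apply Finset.sum_congr rfl
    intro i hi
    have hid : i ≤ d := Nat.lt_succ_iff.mp (Finset.mem_range.mp hi)
    have e1 : (T (d:ℤ) : LaurentPolynomial ℤ) * T ((i:ℤ) * -1) = T (((d - i : ℕ)) : ℤ) := by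
      rw [← T_add]; congr 1; omega
    have e2 : (T (d:ℤ) : LaurentPolynomial ℤ) * ((2 : LaurentPolynomial ℤ) - T 1 - T (-1)) ^ i
        = (-1)^i * T (((d - i : ℕ)):ℤ) * (1 - T 1)^(2*i) := by
      rw [hx2, mul_pow, neg_pow, T_pow, ← pow_mul, ← e1]
      ring_nf
    rw [zsmul_eq_mul, show T (d:ℤ) * (((P.coeff i : ℤ) : LaurentPolynomial ℤ)
        * ((2 : LaurentPolynomial ℤ) - T 1 - T (-1)) ^ i)
      = ((P.coeff i : ℤ) : LaurentPolynomial ℤ)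
        * (T (d:ℤ) * ((2 : LaurentPolynomial ℤ) - T 1 - T (-1)) ^ i) from by ring, e2]
    simp only [map_mul, map_pow, map_sub, map_one, map_neg, Polynomial.toLaurent_C,
      Polynomial.toLaurent_X, T_pow, mul_one, eq_intCast, Int.cast_id, map_intCast]
    ring
  have hdvdQ : ((1 - X : Polynomial ℤ))^n ∣ Q := by
    obtain ⟨a, ha⟩ := Ideal.mem_span_singleton.mp h
    obtain ⟨N, b, hb⟩ := LaurentPolynomial.exists_T_pow a
    have hEq : Q * X^N = X^d * ((1-X)^n * b) := by
      apply Polynomial.toLaurent_injective (R := ℤ)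
      simp only [map_mul, map_pow, map_sub, map_one, Polynomial.toLaurent_X]
      calc Q.toLaurent * (T 1)^N
          = (T (d:ℤ) * ((1 - T 1)^n * a)) * (T 1)^N := by rw [hQL, ha]
        _ = T (d:ℤ) * ((1 - T 1)^n * (a * T (N:ℤ))) := by rw [T_pow, mul_one]; ring
        _ = T (d:ℤ) * ((1 - T 1)^n * b.toLaurent) := by rw [hb]
        _ = (T 1)^d * ((1 - T 1)^n * b.toLaurent) := by rw [T_pow, mul_one]
    have hcop : IsCoprime (((1 - X : Polynomial ℤ))^n) (((X : Polynomial ℤ))^N) :=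
      IsCoprime.pow (⟨1, 1, by ring⟩ : IsCoprime (1 - X : Polynomial ℤ) X)
    exact hcop.dvd_of_dvd_mul_right ⟨X^d * b, by rw [hEq]; ring⟩
  obtain ⟨b', hb'⟩ := hdvdQ
  have hTQ : (∑ i ∈ Finset.range (d+1),
        ((P.coeff i : Polynomial ℤ)) * (-1)^i * (1-X)^(d-i) * X^(2*i) : Polynomial ℤ)
      = X^n * Polynomial.aeval (1 - X : Polynomial ℤ) b' := by
    have h2 := congrArg (Polynomial.aeval (1 - X : Polynomial ℤ)) hb'
    rw [hQ] at h2
    simp only [map_sum, map_mul, map_pow, map_sub, map_one, map_neg,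
      Polynomial.aeval_X, Polynomial.aeval_C, algebraMap_int_eq, eq_intCast, Int.cast_id,
      sub_sub_cancel, map_intCast] at h2
    exact h2
  intro k
  induction k using Nat.strong_induction_on with
  | _ k IH =>
    intro hk
    by_cases hkd : d < k
    · exact Polynomial.coeff_eq_zero_of_natDegree_lt hkd
    push_neg at hkd
    have hcoeff : (X^n * Polynomial.aeval (1 - X : Polynomial ℤ) b').coeff (2*k) = 0 := by
      rw [mul_comm, Polynomial.coeff_mul_X_pow', if_neg (by omega)]
    have hsum := congrArg (fun p : Polynomial ℤ => p.coeff (2*k)) hTQ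
    simp only [Polynomial.finset_sum_coeff, hcoeff] at hsum
    have hsum2 : ∑ i ∈ Finset.range (d+1),
        (((P.coeff i : Polynomial ℤ)) * (-1)^i * (1-X)^(d-i) * X^(2*i)).coeff (2*k)
        = (-1)^k * P.coeff k := by
      rw [Finset.sum_eq_single k]
      · rw [Polynomial.coeff_mul_X_pow', if_pos le_rfl, Nat.sub_self,
          Polynomial.coeff_zero_eq_eval_zero]
        simp
        ring
      · intro i hi hik
        rcases lt_or_gt_of_ne hik with h1 | h1
        · have h0 : P.coeff i = 0 := IH i h1 (by omega)
          simp [h0]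
        · rw [Polynomial.coeff_mul_X_pow', if_neg (by omega)]
      · intro hk'
        exact absurd (Finset.mem_range.mpr (by omega)) hk'
    rw [hsum2] at hsum
    have hne : ((-1 : ℤ))^k ≠ 0 := pow_ne_zero _ (by norm_num)
    exact (mul_eq_zero.mp hsum).resolve_left hne

end helpers

open MvPolynomial LaurentPolynomial

lemma decomp (f : MvPolynomial (Fin 2) ℤ) :
    f - Polynomial.aeval (X 0 : MvPolynomial (Fin 2) ℤ)
        ((MvPolynomial.aeval ![Polynomial.X, 0] f : Polynomial ℤ))
      ∈ Ideal.span {(X 1 : MvPolynomial (Fin 2) ℤ)} := by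
  induction f using MvPolynomial.induction_on with
  | C a => simp
  | add p q hp hq =>
      have := Ideal.add_mem _ hp hq
      convert this using 1
      simp only [map_add]
      ring
  | mul_X p i hp =>
      fin_cases i
      · simp only [Fin.zero_eta, Fin.isValue, map_mul, MvPolynomial.aeval_X, Matrix.cons_val_zero, Polynomial.aeval_X]
        have := Ideal.mul_mem_right (X 0) _ hp
        convert this using 1
        ring
      · simp only [Fin.mk_one, Fin.isValue, map_mul, MvPolynomial.aeval_X, Matrix.cons_val_one, Matrix.head_cons, Matrix.cons_val_zero,
          map_zero, mul_zero, sub_zero]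
        exact Ideal.mem_span_singleton.mpr (Dvd.intro_left p rfl)


theorem stmt10
    (I : Ideal (MvPolynomial (Fin 2) ℤ))
    (hI : I = Ideal.span
        {2 * X 1 - X 0 * X 1, (X 1) ^ 2 - 2 * X 1})
    (r : (MvPolynomial (Fin 2) ℤ ⧸ I) →+* LaurentPolynomial ℤ)
    (hz : r (Ideal.Quotient.mk I (X 0)) = 2 - T 1 - T (-1))
    (hw : r (Ideal.Quotient.mk I (X 1)) = 0) :
    ∀ n : ℕ,
      Ideal.comap r (Ideal.span {((1 - T 1) ^ n : LaurentPolynomial ℤ)})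
        = Ideal.span {(Ideal.Quotient.mk I (X 0)) ^ ((n + 1) / 2),
                      Ideal.Quotient.mk I (X 1)} := by
  intro n
  apply le_antisymm
  · intro y hy
    obtain ⟨f, rfl⟩ := Ideal.Quotient.mk_surjective y
    rw [Ideal.mem_comap] at hy
    set P : Polynomial ℤ := MvPolynomial.aeval ![Polynomial.X, 0] f with hP
    obtain ⟨h1, hh1⟩ := Ideal.mem_span_singleton.mp (decomp f)
    have hmk : Ideal.Quotient.mk I f
        = Ideal.Quotient.mk I (Polynomial.aeval (X 0 : MvPolynomial (Fin 2) ℤ) P)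
          + Ideal.Quotient.mk I (X 1) * Ideal.Quotient.mk I h1 := by
      rw [← map_mul, ← map_add]
      congr 1
      linear_combination hh1
    have hρ : ∀ p : Polynomial ℤ,
        r (Ideal.Quotient.mk I (Polynomial.aeval (X 0 : MvPolynomial (Fin 2) ℤ) p))
          = Polynomial.aeval ((2 : LaurentPolynomial ℤ) - T 1 - T (-1)) p := by
      intro p
      induction p using Polynomial.induction_on' with
      | add p q hp hq => simp only [map_add, hp, hq]
      | monomial m a =>
          simp only [Polynomial.aeval_monomial, map_mul, map_pow, hz, algebraMap_int_eq,
            map_intCast]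
          congr 1
          exact map_intCast (r.comp (Ideal.Quotient.mk I)) a
    have hyg : Polynomial.aeval ((2 : LaurentPolynomial ℤ) - T 1 - T (-1)) P
        ∈ Ideal.span {((1 - T 1) ^ n : LaurentPolynomial ℤ)} := by
      rw [← hρ P]
      have h2 : r (Ideal.Quotient.mk I (Polynomial.aeval (X 0 : MvPolynomial (Fin 2) ℤ) P))
          = r (Ideal.Quotient.mk I f) := by
        rw [hmk, map_add, map_mul, hw, zero_mul, add_zero]
      rw [h2]; exact hy
    have hdvd : (Polynomial.X : Polynomial ℤ)^((n+1)/2) ∣ P :=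
      Polynomial.X_pow_dvd_iff.mpr (fun k hk => key P n hyg k (by omega))
    obtain ⟨Qp, hQp⟩ := hdvd
    refine Ideal.mem_span_pair.mpr
      ⟨Ideal.Quotient.mk I (Polynomial.aeval (X 0 : MvPolynomial (Fin 2) ℤ) Qp),
       Ideal.Quotient.mk I h1, ?_⟩
    have hPe : Polynomial.aeval (X 0 : MvPolynomial (Fin 2) ℤ) P
        = (X 0 : MvPolynomial (Fin 2) ℤ)^((n+1)/2)
          * Polynomial.aeval (X 0 : MvPolynomial (Fin 2) ℤ) Qp := by
      rw [hQp, map_mul, map_pow, Polynomial.aeval_X]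
    rw [hmk, hPe, map_mul, map_pow]
    ring
  · rw [Ideal.span_le]
    rintro y hy
    simp only [Set.mem_insert_iff, Set.mem_singleton_iff] at hy
    rcases hy with rfl | rfl
    · rw [SetLike.mem_coe, Ideal.mem_comap, map_pow, hz]
      refine Ideal.mem_span_singleton.mpr ?_
      have hpow : ((2 : LaurentPolynomial ℤ) - T 1 - T (-1))^((n+1)/2)
          = (-T (-1))^((n+1)/2) * (1 - T 1)^(2*((n+1)/2)) := by
        rw [hx2, mul_pow, ← pow_mul]
      rw [hpow]
      exact Dvd.dvd.mul_left (pow_dvd_pow _ (by omega)) _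
    · rw [SetLike.mem_coe, Ideal.mem_comap, hw]
      exact Ideal.zero_mem _
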